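/- Let a ≥ b > 0 and f(t,x) = M(a+it,b,x)M(a-it,b,x). Then f satisfies the fourth-order linear ODE in x: -4t²x·f + Σ_{k=0}^4 p_k(x)·∂ₓᵏf = 0, where p₀(x) = -2a(1-3b+2b²)-2a(1-4b)x-4ax², p₁(x) = b-3b²+2b³+(2a+b-8ab-6b²)x+(2+8a+6b)x²-2x³, p₂(x) = (5b²-b)x+(-3-4a-10b)x²+5x³, p₃(x) = (1+4b)x²-4x³, p₄(x) = x³. -/

import Mathlib

open Complex

/-- The Kummer confluent hypergeometric function `M(z,b,x)` with complex first
parameter. -/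
noncomputable def kummerM (z : ℂ) (b x : ℝ) : ℂ :=
  ∑' n : ℕ, (ascPochhammer ℂ n).eval z /
    ((ascPochhammer ℂ n).eval (b : ℂ) * (n.factorial : ℂ)) * (x : ℂ) ^ n

namespace KummerAux

/-- series coefficient -/
noncomputable def kc (z : ℂ) (b : ℝ) (n : ℕ) : ℂ :=
  (ascPochhammer ℂ n).eval z / ((ascPochhammer ℂ n).eval (b : ℂ) * (n.factorial : ℂ))

lemma kummerM_eq (z : ℂ) (b x : ℝ) : kummerM z b x = ∑' n, kc z b n * (x : ℂ) ^ n := rfl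

lemma poch_ne (b : ℝ) (hb : 0 < b) (n : ℕ) : (ascPochhammer ℂ n).eval (b : ℂ) ≠ 0 := by
  have h : (ascPochhammer ℂ n).eval (b : ℂ) = (((ascPochhammer ℝ n).eval b : ℝ) : ℂ) := by
    rw [← ascPochhammer_map (algebraMap ℝ ℂ) n, show ((b:ℝ):ℂ) = algebraMap ℝ ℂ b from rfl,
      Polynomial.eval_map, Polynomial.eval₂_at_apply]
    rfl
  rw [h]
  exact_mod_cast (ascPochhammer_pos n b hb).ne'

lemma kc_zero (z : ℂ) (b : ℝ) : kc z b 0 = 1 := by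
  simp [kc]

lemma kc_succ (z : ℂ) (b : ℝ) (n : ℕ) :
    kc z b (n + 1) = kc z b n * ((z + n) / (((b : ℂ) + n) * (n + 1))) := by
  rw [kc, kc, ascPochhammer_succ_eval, ascPochhammer_succ_eval, div_mul_div_comm]
  rw [Nat.factorial_succ]
  push_cast
  ring_nf

lemma norm_kc_le (z : ℂ) (b : ℝ) (hb : 0 < b) (n : ℕ) :
    ‖kc z b n‖ ≤ ((1 + ‖z‖) * (1 + 1/b)) ^ n / n.factorial := by
  induction n with
  | zero => simp [kc_zero]
  | succ n ih =>
    have hbn : (0:ℝ) < b + n := by positivity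
    have hd : (((b:ℂ) + n) * ((n:ℂ) + 1)) = (((b + n) * (n + 1) : ℝ) : ℂ) := by
      push_cast; ring
    rw [kc_succ, norm_mul, norm_div, hd, Complex.norm_real,
      Real.norm_eq_abs, abs_of_pos (by positivity)]
    have h3 : ‖z + (n:ℂ)‖ ≤ ‖z‖ + n := by simpa using norm_add_le z (n : ℂ)
    have hK : ‖z + (n:ℂ)‖ ≤ (1 + ‖z‖) * (1 + 1/b) * (b + n) := by
      have h5 : (‖z‖ + n) * b ≤ (1 + ‖z‖) * (b + 1) * (b + n) := by
        nlinarith [norm_nonneg z, (Nat.cast_nonneg n : (0:ℝ) ≤ n),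
          mul_nonneg (norm_nonneg z) (Nat.cast_nonneg n : (0:ℝ) ≤ n), sq_nonneg b,
          mul_nonneg (norm_nonneg z) hb.le]
      have h6 : (1 + ‖z‖) * (1 + 1/b) * (b + n) = (1 + ‖z‖) * (b + 1) * (b + n) / b := by
        field_simp
      rw [h6, le_div_iff₀ hb]
      calc ‖z + (n:ℂ)‖ * b ≤ (‖z‖ + n) * b := mul_le_mul_of_nonneg_right h3 hb.le
        _ ≤ (1 + ‖z‖) * (b + 1) * (b + n) := h5
    have h4 : ‖z + (n:ℂ)‖ / ((b + n) * (n + 1)) ≤ ((1 + ‖z‖) * (1 + 1/b)) / (n + 1) := by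
      rw [div_le_div_iff₀ (by positivity) (by positivity)]
      have := mul_le_mul_of_nonneg_right hK (le_of_lt (by positivity : (0:ℝ) < (n:ℝ) + 1))
      nlinarith [this]
    calc ‖kc z b n‖ * (‖z + (n:ℂ)‖ / ((b + n) * (n + 1)))
        ≤ (((1 + ‖z‖) * (1 + 1/b)) ^ n / n.factorial) * (((1 + ‖z‖) * (1 + 1/b)) / (n + 1)) := by
          apply mul_le_mul ih h4 (by positivity) (by positivity)
      _ = ((1 + ‖z‖) * (1 + 1/b)) ^ (n+1) / (n+1).factorial := by
          rw [Nat.factorial_succ, div_mul_div_comm]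
          push_cast
          ring

lemma summable_master (z : ℂ) (b : ℝ) (hb : 0 < b) (r : ℝ) (hr : 0 ≤ r) :
    Summable (fun n : ℕ => ‖kc z b n‖ * (n + 1) * r ^ n) := by
  refine Summable.of_nonneg_of_le (fun n => by positivity) (fun n => ?_)
    (Real.summable_pow_div_factorial (2 * ((1 + ‖z‖) * (1 + 1/b)) * r))
  ·
    have h1 : ‖kc z b n‖ ≤ ((1 + ‖z‖) * (1 + 1/b)) ^ n / n.factorial := norm_kc_le z b hb n
    have hKnn : (0:ℝ) ≤ (1 + ‖z‖) * (1 + 1/b) := by positivity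
    have h2 : (n + 1 : ℝ) ≤ 2 ^ n := by
      exact_mod_cast (Nat.lt_two_pow_self (n := n))
    calc ‖kc z b n‖ * (n + 1) * r ^ n ≤ (((1 + ‖z‖) * (1 + 1/b)) ^ n / n.factorial) * 2 ^ n * r ^ n := by
          apply mul_le_mul_of_nonneg_right _ (by positivity)
          apply mul_le_mul h1 h2 (by positivity) (by positivity)
      _ = (2 * ((1 + ‖z‖) * (1 + 1/b)) * r) ^ n / n.factorial := by
          rw [show (2 * ((1 + ‖z‖) * (1 + 1/b)) * r) ^ n
              = 2 ^ n * ((1 + ‖z‖) ^ n * (1 + 1/b) ^ n) * r ^ n by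
            rw [mul_pow, mul_pow, mul_pow]]
          rw [mul_pow]
          ring

lemma hasSum_kummerM (z : ℂ) (b : ℝ) (hb : 0 < b) (x : ℝ) :
    HasSum (fun n : ℕ => kc z b n * (x : ℂ) ^ n) (kummerM z b x) := by
  rw [kummerM_eq]
  apply Summable.hasSum
  apply Summable.of_norm_bounded (summable_master z b hb |x| (abs_nonneg x))
  intro n
  rw [norm_mul, norm_pow, Complex.norm_real, Real.norm_eq_abs]
  calc ‖kc z b n‖ * |x| ^ n ≤ ‖kc z b n‖ * ((n+1) * |x| ^ n) := by
        apply mul_le_mul_of_nonneg_left _ (norm_nonneg _)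
        nlinarith [pow_nonneg (abs_nonneg x) n]
    _ = ‖kc z b n‖ * (n + 1) * |x| ^ n := by ring

end KummerAux

namespace KummerAux2
open KummerAux

lemma poch_succ_left_eval (w : ℂ) (n : ℕ) :
    (ascPochhammer ℂ (n+1)).eval w = w * (ascPochhammer ℂ n).eval (w+1) := by
  rw [ascPochhammer_succ_left, Polynomial.eval_mul, Polynomial.eval_X, Polynomial.eval_comp,
    Polynomial.eval_add, Polynomial.eval_X, Polynomial.eval_one]

lemma cast_b1 (b : ℝ) : ((b+1:ℝ):ℂ) = (b:ℂ)+1 := by push_cast; ring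

lemma helper_frac (n1 z A b B F : ℂ) (hn1 : n1 ≠ 0) (hb : b ≠ 0) (hB : B ≠ 0) (hF : F ≠ 0) :
    n1 * (z * A / ((b * B) * (n1 * F))) = z / b * (A / (B * F)) := by
  field_simp

lemma kc_succ' (z : ℂ) (b : ℝ) (hb : 0 < b) (n : ℕ) :
    ((n:ℂ)+1) * kc z b (n+1) = z / b * kc (z+1) (b+1) n := by
  have hB : (ascPochhammer ℂ n).eval ((b:ℂ)+1) ≠ 0 := by
    rw [← cast_b1 b]; exact poch_ne (b+1) (by linarith) n
  have hb0 : ((b:ℝ):ℂ) ≠ 0 := by exact_mod_cast hb.ne'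
  have hfac : ((n.factorial : ℂ)) ≠ 0 := by exact_mod_cast n.factorial_ne_zero
  have hn1 : ((n:ℂ)+1) ≠ 0 := Nat.cast_add_one_ne_zero n
  rw [kc, kc, poch_succ_left_eval z n, poch_succ_left_eval (b:ℂ) n, cast_b1 b,
    Nat.factorial_succ, Nat.cast_mul, Nat.cast_add, Nat.cast_one]
  exact helper_frac _ _ _ _ _ _ hn1 hb0 hB hfac

lemma hasDerivAt_kummerM (z : ℂ) (b : ℝ) (hb : 0 < b) (x : ℝ) :
    HasDerivAt (fun y : ℝ => kummerM z b y) (z / b * kummerM (z+1) (b+1) x) x := by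
  set R := |x| + 1 with hR
  have hR1 : (1:ℝ) ≤ R := by rw [hR]; linarith [abs_nonneg x]
  have hu : Summable (fun n : ℕ => ‖kc z b n‖ * (n+1) * R^n) :=
    summable_master z b hb R (by positivity)
  have hbound : ∀ (n : ℕ) (y : ℝ), y ∈ Metric.ball (0:ℝ) R →
      ‖kc z b n * ((n:ℂ) * (y:ℂ)^(n-1))‖ ≤ ‖kc z b n‖ * (n+1) * R^n := by
    intro n y hy
    have hyR : |y| ≤ R := by
      rw [Metric.mem_ball, Real.dist_eq, sub_zero] at hy; exact hy.le
    rw [norm_mul, norm_mul, norm_pow, Complex.norm_real, Real.norm_eq_abs,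
      Complex.norm_natCast]
    have h1 : |y| ^ (n-1) ≤ R ^ n := by
      calc |y| ^ (n-1) ≤ R ^ (n-1) := pow_le_pow_left₀ (abs_nonneg y) hyR _
        _ ≤ R ^ n := pow_le_pow_right₀ (by linarith) (Nat.sub_le n 1)
    calc ‖kc z b n‖ * ((n:ℝ) * |y| ^ (n-1)) ≤ ‖kc z b n‖ * ((n+1) * R ^ n) := by
          apply mul_le_mul_of_nonneg_left _ (norm_nonneg _)
          apply mul_le_mul (by linarith) h1 (by positivity) (by positivity)
      _ = ‖kc z b n‖ * (n+1) * R ^ n := by ring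
  have hmem : x ∈ Metric.ball (0:ℝ) R := by
    rw [Metric.mem_ball, Real.dist_eq, sub_zero, hR]; linarith [abs_nonneg x]
  have key := hasDerivAt_tsum_of_isPreconnected hu Metric.isOpen_ball
    ((convex_ball (0:ℝ) R).isPreconnected)
    (g := fun n (y:ℝ) => kc z b n * (y:ℂ)^n)
    (g' := fun n (y:ℝ) => kc z b n * ((n:ℂ) * (y:ℂ)^(n-1)))
    (fun n y _ => ((hasDerivAt_pow n ((y:ℝ):ℂ)).comp_ofReal).const_mul (kc z b n))
    hbound hmem ((hasSum_kummerM z b hb x).summable) hmem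
  have hfun : (fun y : ℝ => ∑' n, kc z b n * (y:ℂ)^n) = fun y : ℝ => kummerM z b y := by
    funext y; rw [kummerM_eq]
  rw [hfun] at key
  have hsum2 : Summable (fun n : ℕ => kc z b n * ((n:ℂ) * (x:ℂ)^(n-1))) :=
    Summable.of_norm_bounded hu (fun n => hbound n x hmem)
  have hval : ∑' n : ℕ, kc z b n * ((n:ℂ) * (x:ℂ)^(n-1)) = z / b * kummerM (z+1) (b+1) x := by
    rw [Summable.tsum_eq_zero_add hsum2]
    simp only [Nat.cast_zero, zero_mul, mul_zero, zero_add]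
    have : ∀ n : ℕ, kc z b (n+1) * (((n+1:ℕ):ℂ) * (x:ℂ)^((n+1)-1))
        = z / b * (kc (z+1) (b+1) n * (x:ℂ)^n) := by
      intro n
      have h := kc_succ' z b hb n
      push_cast
      calc kc z b (n+1) * (((n:ℂ)+1) * (x:ℂ)^n) = (((n:ℂ)+1) * kc z b (n+1)) * (x:ℂ)^n := by
            ring
        _ = z / b * (kc (z+1) (b+1) n * (x:ℂ)^n) := by rw [h]; ring
    rw [tsum_congr this, tsum_mul_left, ← kummerM_eq]
  rw [hval] at key
  exact key

end KummerAux2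

namespace KummerAux3
open KummerAux KummerAux2

lemma cast_b2 (b : ℝ) : ((b+2:ℝ):ℂ) = (b:ℂ)+2 := by push_cast; ring

lemma helper_rel (z b N A1 A2 B1 B2 F : ℂ) (hb : b ≠ 0) (hb1 : b+1 ≠ 0)
    (hB1 : B1 ≠ 0) (hB2 : B2 ≠ 0) (hF : F ≠ 0) (hN : N+1 ≠ 0) (hbn : b+1+N ≠ 0)
    (hA : (z+1)*A2 = A1*(z+1+N)) (hB : (b+1)*B2 = B1*(b+1+N)) :
    z/b * ((z+1)/(b+1) * (A2/(B2*F))) + z * ((A1*(z+1+N))/((B1*(b+1+N))*((N+1)*F)))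
      = z/b * (A1/(B1*F)) + z * ((z*A1)/((b*B1)*((N+1)*F))) := by
  have hD1 : b*((b+1)*(B2*F)) ≠ 0 := by
    exact mul_ne_zero hb (mul_ne_zero hb1 (mul_ne_zero hB2 hF))
  rw [show z/b * ((z+1)/(b+1) * (A2/(B2*F))) = z*((z+1)*A2)/(b*((b+1)*(B2*F))) from by
    rw [div_mul_div_comm, div_mul_div_comm]]
  have hD3 : (B1*(b+1+N))*((N+1)*F) ≠ 0 := by
    exact mul_ne_zero (mul_ne_zero hB1 hbn) (mul_ne_zero hN hF)
  have hD2 : b*(B1*F) ≠ 0 := mul_ne_zero hb (mul_ne_zero hB1 hF)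
  have hD4 : (b*B1)*((N+1)*F) ≠ 0 := by
    exact mul_ne_zero (mul_ne_zero hb hB1) (mul_ne_zero hN hF)
  rw [div_mul_div_comm, ← mul_div_assoc, ← mul_div_assoc,
    div_add_div _ _ hD1 hD3, div_add_div _ _ hD2 hD4, div_eq_div_iff (mul_ne_zero hD1 hD3)
      (mul_ne_zero hD2 hD4)]
  linear_combination (z*b^2*B1^3*F^3*((1+N)^2*(1+N+b))) * hA
    - (z*b^2*A1*B1^2*F^3*((1+N)^2*(1+N+z))) * hB

lemma kc_rel (z : ℂ) (b : ℝ) (hb : 0 < b) (n : ℕ) :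
    z/(b:ℂ) * ((z+1)/((b:ℂ)+1) * kc (z+2) (b+2) n) + z * kc (z+1) (b+1) (n+1)
      = z/(b:ℂ) * kc (z+1) (b+1) n + z * kc z b (n+1) := by
  have hb0 : ((b:ℝ):ℂ) ≠ 0 := by exact_mod_cast hb.ne'
  have hb1 : ((b:ℂ)+1) ≠ 0 := by
    rw [← cast_b1 b]; exact_mod_cast (by linarith : (0:ℝ) < b+1).ne'
  have hB1 : (ascPochhammer ℂ n).eval ((b:ℂ)+1) ≠ 0 := by
    rw [← cast_b1 b]; exact poch_ne (b+1) (by linarith) n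
  have hB2 : (ascPochhammer ℂ n).eval ((b:ℂ)+2) ≠ 0 := by
    rw [← cast_b2 b]; exact poch_ne (b+2) (by linarith) n
  have hfac : ((n.factorial : ℂ)) ≠ 0 := by exact_mod_cast n.factorial_ne_zero
  have hn1 : ((n:ℂ)+1) ≠ 0 := Nat.cast_add_one_ne_zero n
  have hbn : ((b:ℂ)+1+(n:ℂ)) ≠ 0 := by
    have h : ((b+1+n:ℝ):ℂ) = (b:ℂ)+1+(n:ℂ) := by push_cast; ring
    rw [← h]
    exact_mod_cast (by positivity : (0:ℝ) < b+1+n).ne'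
  have hA : (z+1) * (ascPochhammer ℂ n).eval (z+2)
      = (ascPochhammer ℂ n).eval (z+1) * (z+1+(n:ℂ)) := by
    have h1 := poch_succ_left_eval (z+1) n
    have h2 := ascPochhammer_succ_eval n (z+1)
    rw [show z+1+1 = z+2 from by ring] at h1
    exact h1.symm.trans h2
  have hB : ((b:ℂ)+1) * (ascPochhammer ℂ n).eval ((b:ℂ)+2)
      = (ascPochhammer ℂ n).eval ((b:ℂ)+1) * ((b:ℂ)+1+(n:ℂ)) := by
    have h1 := poch_succ_left_eval ((b:ℂ)+1) n
    have h2 := ascPochhammer_succ_eval n ((b:ℂ)+1)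
    rw [show (b:ℂ)+1+1 = (b:ℂ)+2 from by ring] at h1
    exact h1.symm.trans h2
  have e1 : kc (z+1) (b+1) n
      = (ascPochhammer ℂ n).eval (z+1) / ((ascPochhammer ℂ n).eval ((b:ℂ)+1) * (n.factorial:ℂ)) := by
    rw [kc, cast_b1]
  have e2 : kc (z+2) (b+2) n
      = (ascPochhammer ℂ n).eval (z+2) / ((ascPochhammer ℂ n).eval ((b:ℂ)+2) * (n.factorial:ℂ)) := by
    rw [kc, cast_b2]
  have e3 : kc (z+1) (b+1) (n+1)
      = ((ascPochhammer ℂ n).eval (z+1) * (z+1+(n:ℂ)))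
        / (((ascPochhammer ℂ n).eval ((b:ℂ)+1) * ((b:ℂ)+1+(n:ℂ))) * (((n:ℂ)+1) * (n.factorial:ℂ))) := by
    rw [kc, ascPochhammer_succ_eval n (z+1), cast_b1 b, ascPochhammer_succ_eval n ((b:ℂ)+1),
      Nat.factorial_succ, Nat.cast_mul, Nat.cast_add, Nat.cast_one]
  have e4 : kc z b (n+1)
      = (z * (ascPochhammer ℂ n).eval (z+1))
        / (((b:ℂ) * (ascPochhammer ℂ n).eval ((b:ℂ)+1)) * (((n:ℂ)+1) * (n.factorial:ℂ))) := by
    rw [kc, poch_succ_left_eval z n, poch_succ_left_eval (b:ℂ) n,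
      Nat.factorial_succ, Nat.cast_mul, Nat.cast_add, Nat.cast_one]
  rw [e1, e2, e3, e4]
  exact helper_rel z (b:ℂ) (n:ℂ) _ _ _ _ _ hb0 hb1 hB1 hB2 hfac hn1 hbn hA hB

lemma kummer_ode (z : ℂ) (b : ℝ) (hb : 0 < b) (x : ℝ) :
    (x:ℂ) * (z/(b:ℂ) * ((z+1)/((b:ℂ)+1) * kummerM (z+2) (b+2) x))
      = ((x:ℂ) - b) * (z/(b:ℂ) * kummerM (z+1) (b+1) x) + z * kummerM z b x := by
  have hb0 : ((b:ℝ):ℂ) ≠ 0 := by exact_mod_cast hb.ne'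
  have h0 := hasSum_kummerM z b hb x
  have h1 := hasSum_kummerM (z+1) (b+1) (by linarith) x
  have h2 := hasSum_kummerM (z+2) (b+2) (by linarith) x
  have h0' : HasSum (fun n : ℕ => kc z b (n+1) * (x:ℂ)^(n+1)) (kummerM z b x - 1) := by
    have := (hasSum_nat_add_iff' (f := fun n : ℕ => kc z b n * (x:ℂ)^n) 1).mpr h0
    simpa [kc_zero] using this
  have h1' : HasSum (fun n : ℕ => kc (z+1) (b+1) (n+1) * (x:ℂ)^(n+1))
      (kummerM (z+1) (b+1) x - 1) := by
    have := (hasSum_nat_add_iff' (f := fun n : ℕ => kc (z+1) (b+1) n * (x:ℂ)^n) 1).mpr h1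
    simpa [kc_zero] using this
  have H := (((h2.mul_left ((x:ℂ) * (z/(b:ℂ) * ((z+1)/((b:ℂ)+1))))).add (h1'.mul_left z)).sub
    ((h1.mul_left ((x:ℂ) * (z/(b:ℂ)))).add (h0'.mul_left z)))
  have hzero : (fun n : ℕ =>
      ((x:ℂ) * (z/(b:ℂ) * ((z+1)/((b:ℂ)+1)))) * (kc (z+2) (b+2) n * (x:ℂ)^n)
        + z * (kc (z+1) (b+1) (n+1) * (x:ℂ)^(n+1))
        - (((x:ℂ) * (z/(b:ℂ))) * (kc (z+1) (b+1) n * (x:ℂ)^n)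
          + z * (kc z b (n+1) * (x:ℂ)^(n+1)))) = fun _ => (0:ℂ) := by
    funext n
    have h := kc_rel z b hb n
    linear_combination ((x:ℂ)^(n+1)) * h
  rw [hzero] at H
  have hS := H.unique hasSum_zero
  have hbz : (b:ℂ) * (z/(b:ℂ)) = z := mul_div_cancel₀ z hb0
  linear_combination hS + hbz * kummerM (z+1) (b+1) x

end KummerAux3

open KummerAux KummerAux2 KummerAux3

/-- For `a ≥ b > 0`, the function `f(t,x) = M(a+it,b,x)·M(a-it,b,x)` satisfies
the fourth-order linear ODE in `x`:
`-4t²x·f + Σ_{k=0}^4 p_k(x)·∂ₓᵏf = 0` with the explicit polynomial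
coefficients `p₀,…,p₄`. -/
theorem kummerM_sq_ODE (a b : ℝ) (hb : 0 < b) (hab : b ≤ a)
    (f : ℝ → ℝ → ℂ)
    (hf : ∀ t x : ℝ, f t x =
      kummerM ((a : ℂ) + t * Complex.I) b x * kummerM ((a : ℂ) - t * Complex.I) b x)
    (t x : ℝ) :
    -4 * (t : ℂ) ^ 2 * (x : ℂ) * f t x +
      (-2 * a * (1 - 3 * b + 2 * (b : ℂ) ^ 2) - 2 * a * (1 - 4 * b) * (x : ℂ)
          - 4 * a * (x : ℂ) ^ 2) * f t x +
      ((b : ℂ) - 3 * (b : ℂ) ^ 2 + 2 * (b : ℂ) ^ 3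
          + (2 * a + b - 8 * a * b - 6 * (b : ℂ) ^ 2) * (x : ℂ)
          + (2 + 8 * a + 6 * b) * (x : ℂ) ^ 2 - 2 * (x : ℂ) ^ 3) *
        iteratedDeriv 1 (fun x' : ℝ => f t x') x +
      ((5 * (b : ℂ) ^ 2 - b) * (x : ℂ) + (-3 - 4 * a - 10 * b) * (x : ℂ) ^ 2
          + 5 * (x : ℂ) ^ 3) *
        iteratedDeriv 2 (fun x' : ℝ => f t x') x +
      ((1 + 4 * (b : ℂ)) * (x : ℂ) ^ 2 - 4 * (x : ℂ) ^ 3) *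
        iteratedDeriv 3 (fun x' : ℝ => f t x') x +
      (x : ℂ) ^ 3 * iteratedDeriv 4 (fun x' : ℝ => f t x') x = 0 := by
  have hU0 : ∀ y : ℝ, HasDerivAt (fun y : ℝ => (kummerM ((a:ℂ) + (t:ℂ) * Complex.I) b y)) ((((a:ℂ) + (t:ℂ) * Complex.I)/(b:ℂ) * (kummerM (((a:ℂ) + (t:ℂ) * Complex.I)+1) (b+1) y))) y := by
    intro y
    exact hasDerivAt_kummerM ((a:ℂ) + (t:ℂ) * Complex.I) b hb y
  have hU1 : ∀ y : ℝ, HasDerivAt (fun y : ℝ => (((a:ℂ) + (t:ℂ) * Complex.I)/(b:ℂ) * (kummerM (((a:ℂ) + (t:ℂ) * Complex.I)+1) (b+1) y))) ((((a:ℂ) + (t:ℂ) * Complex.I)/(b:ℂ) * ((((a:ℂ) + (t:ℂ) * Complex.I)+1)/((b:ℂ)+1) * (kummerM (((a:ℂ) + (t:ℂ) * Complex.I)+2) (b+2) y)))) y := by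
    intro y
    have h := hasDerivAt_kummerM (((a:ℂ) + (t:ℂ) * Complex.I)+1) (b+1) (by linarith) y
    rw [show (((a:ℂ) + (t:ℂ) * Complex.I)+1)+1 = ((a:ℂ) + (t:ℂ) * Complex.I)+2 from by ring,
      show ((b+1)+1 : ℝ) = b+2 from by ring,
      show (((b+1:ℝ)):ℂ) = (b:ℂ)+1 from by push_cast; ring] at h
    exact (h.const_mul (((a:ℂ) + (t:ℂ) * Complex.I)/(b:ℂ)))
  have hU2 : ∀ y : ℝ, HasDerivAt (fun y : ℝ => (((a:ℂ) + (t:ℂ) * Complex.I)/(b:ℂ) * ((((a:ℂ) + (t:ℂ) * Complex.I)+1)/((b:ℂ)+1) * (kummerM (((a:ℂ) + (t:ℂ) * Complex.I)+2) (b+2) y)))) ((((a:ℂ) + (t:ℂ) * Complex.I)/(b:ℂ) * ((((a:ℂ) + (t:ℂ) * Complex.I)+1)/((b:ℂ)+1) * ((((a:ℂ) + (t:ℂ) * Complex.I)+2)/((b:ℂ)+2) * (kummerM (((a:ℂ) + (t:ℂ) * Complex.I)+3) (b+3) y))))) y := by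
    intro y
    have h := hasDerivAt_kummerM (((a:ℂ) + (t:ℂ) * Complex.I)+2) (b+2) (by linarith) y
    rw [show (((a:ℂ) + (t:ℂ) * Complex.I)+2)+1 = ((a:ℂ) + (t:ℂ) * Complex.I)+3 from by ring,
      show ((b+2)+1 : ℝ) = b+3 from by ring,
      show (((b+2:ℝ)):ℂ) = (b:ℂ)+2 from by push_cast; ring] at h
    exact ((h.const_mul ((((a:ℂ) + (t:ℂ) * Complex.I)+1)/((b:ℂ)+1))).const_mul (((a:ℂ) + (t:ℂ) * Complex.I)/(b:ℂ)))
  have hU3 : ∀ y : ℝ, HasDerivAt (fun y : ℝ => (((a:ℂ) + (t:ℂ) * Complex.I)/(b:ℂ) * ((((a:ℂ) + (t:ℂ) * Complex.I)+1)/((b:ℂ)+1) * ((((a:ℂ) + (t:ℂ) * Complex.I)+2)/((b:ℂ)+2) * (kummerM (((a:ℂ) + (t:ℂ) * Complex.I)+3) (b+3) y))))) ((((a:ℂ) + (t:ℂ) * Complex.I)/(b:ℂ) * ((((a:ℂ) + (t:ℂ) * Complex.I)+1)/((b:ℂ)+1) * ((((a:ℂ) + (t:ℂ) * Complex.I)+2)/((b:ℂ)+2)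 * ((((a:ℂ) + (t:ℂ) * Complex.I)+3)/((b:ℂ)+3) * (kummerM (((a:ℂ) + (t:ℂ) * Complex.I)+4) (b+4) y)))))) y := by
    intro y
    have h := hasDerivAt_kummerM (((a:ℂ) + (t:ℂ) * Complex.I)+3) (b+3) (by linarith) y
    rw [show (((a:ℂ) + (t:ℂ) * Complex.I)+3)+1 = ((a:ℂ) + (t:ℂ) * Complex.I)+4 from by ring,
      show ((b+3)+1 : ℝ) = b+4 from by ring,
      show (((b+3:ℝ)):ℂ) = (b:ℂ)+3 from by push_cast; ring] at h
    exact (((h.const_mul ((((a:ℂ) + (t:ℂ) * Complex.I)+2)/((b:ℂ)+2))).const_mul ((((a:ℂ) + (t:ℂ) * Complex.I)+1)/((b:ℂ)+1))).const_mul (((a:ℂ) + (t:ℂ) * Complex.I)/(b:ℂ)))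
  have hV0 : ∀ y : ℝ, HasDerivAt (fun y : ℝ => (kummerM ((a:ℂ) - (t:ℂ) * Complex.I) b y)) ((((a:ℂ) - (t:ℂ) * Complex.I)/(b:ℂ) * (kummerM (((a:ℂ) - (t:ℂ) * Complex.I)+1) (b+1) y))) y := by
    intro y
    exact hasDerivAt_kummerM ((a:ℂ) - (t:ℂ) * Complex.I) b hb y
  have hV1 : ∀ y : ℝ, HasDerivAt (fun y : ℝ => (((a:ℂ) - (t:ℂ) * Complex.I)/(b:ℂ) * (kummerM (((a:ℂ) - (t:ℂ) * Complex.I)+1) (b+1) y))) ((((a:ℂ) - (t:ℂ) * Complex.I)/(b:ℂ) * ((((a:ℂ) - (t:ℂ) * Complex.I)+1)/((b:ℂ)+1) * (kummerM (((a:ℂ) - (t:ℂ) * Complex.I)+2) (b+2) y)))) y := by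
    intro y
    have h := hasDerivAt_kummerM (((a:ℂ) - (t:ℂ) * Complex.I)+1) (b+1) (by linarith) y
    rw [show (((a:ℂ) - (t:ℂ) * Complex.I)+1)+1 = ((a:ℂ) - (t:ℂ) * Complex.I)+2 from by ring,
      show ((b+1)+1 : ℝ) = b+2 from by ring,
      show (((b+1:ℝ)):ℂ) = (b:ℂ)+1 from by push_cast; ring] at h
    exact (h.const_mul (((a:ℂ) - (t:ℂ) * Complex.I)/(b:ℂ)))
  have hV2 : ∀ y : ℝ, HasDerivAt (fun y : ℝ => (((a:ℂ) - (t:ℂ) * Complex.I)/(b:ℂ) * ((((a:ℂ) - (t:ℂ) * Complex.I)+1)/((b:ℂ)+1) * (kummerM (((a:ℂ) - (t:ℂ) * Complex.I)+2) (b+2) y)))) ((((a:ℂ) - (t:ℂ) * Complex.I)/(b:ℂ) * ((((a:ℂ) - (t:ℂ) * Complex.I)+1)/((b:ℂ)+1) * ((((a:ℂ) - (t:ℂ) * Complex.I)+2)/((b:ℂ)+2) * (kummerM (((a:ℂ) - (t:ℂ) * Complex.I)+3) (b+3) y))))) y := by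
    intro y
    have h := hasDerivAt_kummerM (((a:ℂ) - (t:ℂ) * Complex.I)+2) (b+2) (by linarith) y
    rw [show (((a:ℂ) - (t:ℂ) * Complex.I)+2)+1 = ((a:ℂ) - (t:ℂ) * Complex.I)+3 from by ring,
      show ((b+2)+1 : ℝ) = b+3 from by ring,
      show (((b+2:ℝ)):ℂ) = (b:ℂ)+2 from by push_cast; ring] at h
    exact ((h.const_mul ((((a:ℂ) - (t:ℂ) * Complex.I)+1)/((b:ℂ)+1))).const_mul (((a:ℂ) - (t:ℂ) * Complex.I)/(b:ℂ)))
  have hV3 : ∀ y : ℝ, HasDerivAt (fun y : ℝ => (((a:ℂ) - (t:ℂ) * Complex.I)/(b:ℂ) * ((((a:ℂ) - (t:ℂ) * Complex.I)+1)/((b:ℂ)+1) * ((((a:ℂ) - (t:ℂ) * Complex.I)+2)/((b:ℂ)+2) * (kummerM (((a:ℂ) - (t:ℂ) * Complex.I)+3) (b+3) y))))) ((((a:ℂ) - (t:ℂ) * Complex.I)/(b:ℂ) * ((((a:ℂ) - (t:ℂ) * Complex.I)+1)/((b:ℂ)+1) * ((((a:ℂ) - (t:ℂ) * Complex.I)+2)/((b:ℂ)+2)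 * ((((a:ℂ) - (t:ℂ) * Complex.I)+3)/((b:ℂ)+3) * (kummerM (((a:ℂ) - (t:ℂ) * Complex.I)+4) (b+4) y)))))) y := by
    intro y
    have h := hasDerivAt_kummerM (((a:ℂ) - (t:ℂ) * Complex.I)+3) (b+3) (by linarith) y
    rw [show (((a:ℂ) - (t:ℂ) * Complex.I)+3)+1 = ((a:ℂ) - (t:ℂ) * Complex.I)+4 from by ring,
      show ((b+3)+1 : ℝ) = b+4 from by ring,
      show (((b+3:ℝ)):ℂ) = (b:ℂ)+3 from by push_cast; ring] at h
    exact (((h.const_mul ((((a:ℂ) - (t:ℂ) * Complex.I)+2)/((b:ℂ)+2))).const_mul ((((a:ℂ) - (t:ℂ) * Complex.I)+1)/((b:ℂ)+1))).const_mul (((a:ℂ) - (t:ℂ) * Complex.I)/(b:ℂ)))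
  have hRU2 : (x:ℂ) * (((a:ℂ) + (t:ℂ) * Complex.I)/(b:ℂ) * ((((a:ℂ) + (t:ℂ) * Complex.I)+1)/((b:ℂ)+1) * (kummerM (((a:ℂ) + (t:ℂ) * Complex.I)+2) (b+2) x))) = ((x:ℂ) - b - 0) * (((a:ℂ) + (t:ℂ) * Complex.I)/(b:ℂ) * (kummerM (((a:ℂ) + (t:ℂ) * Complex.I)+1) (b+1) x)) + (((a:ℂ) + (t:ℂ) * Complex.I)+0) * (kummerM ((a:ℂ) + (t:ℂ) * Complex.I) b x) := by
    have h := kummer_ode ((a:ℂ) + (t:ℂ) * Complex.I) b hb x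
    linear_combination h
  have hRU3 : (x:ℂ) * (((a:ℂ) + (t:ℂ) * Complex.I)/(b:ℂ) * ((((a:ℂ) + (t:ℂ) * Complex.I)+1)/((b:ℂ)+1) * ((((a:ℂ) + (t:ℂ) * Complex.I)+2)/((b:ℂ)+2) * (kummerM (((a:ℂ) + (t:ℂ) * Complex.I)+3) (b+3) x)))) = ((x:ℂ) - b - 1) * (((a:ℂ) + (t:ℂ) * Complex.I)/(b:ℂ) * ((((a:ℂ) + (t:ℂ) * Complex.I)+1)/((b:ℂ)+1) * (kummerM (((a:ℂ) + (t:ℂ) * Complex.I)+2) (b+2) x))) + (((a:ℂ) + (t:ℂ) * Complex.I)+1) * (((a:ℂ) + (t:ℂ) * Complex.I)/(b:ℂ) * (kummerM (((a:ℂ) + (t:ℂ) * Complex.I)+1) (b+1) x)) := by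
    have h := kummer_ode (((a:ℂ) + (t:ℂ) * Complex.I)+1) (b+1) (by linarith) x
    rw [show (((a:ℂ) + (t:ℂ) * Complex.I)+1)+2 = ((a:ℂ) + (t:ℂ) * Complex.I)+3 from by ring,
      show ((b+1)+2 : ℝ) = b+3 from by ring,
      show (((a:ℂ) + (t:ℂ) * Complex.I)+1)+1 = ((a:ℂ) + (t:ℂ) * Complex.I)+2 from by ring,
      show ((b+1)+1 : ℝ) = b+2 from by ring,
      show (((b+1:ℝ)):ℂ) = (b:ℂ)+1 from by push_cast; ring] at h
    linear_combination ((((a:ℂ) + (t:ℂ) * Complex.I)/(b:ℂ))) * h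
  have hRU4 : (x:ℂ) * (((a:ℂ) + (t:ℂ) * Complex.I)/(b:ℂ) * ((((a:ℂ) + (t:ℂ) * Complex.I)+1)/((b:ℂ)+1) * ((((a:ℂ) + (t:ℂ) * Complex.I)+2)/((b:ℂ)+2) * ((((a:ℂ) + (t:ℂ) * Complex.I)+3)/((b:ℂ)+3) * (kummerM (((a:ℂ) + (t:ℂ) * Complex.I)+4) (b+4) x))))) = ((x:ℂ) - b - 2) * (((a:ℂ) + (t:ℂ) * Complex.I)/(b:ℂ) * ((((a:ℂ) + (t:ℂ) * Complex.I)+1)/((b:ℂ)+1) * ((((a:ℂ) + (t:ℂ) * Complex.I)+2)/((b:ℂ)+2) * (kummerM (((a:ℂ) + (t:ℂ) * Complex.I)+3) (b+3) x)))) + (((a:ℂ) + (t:ℂ) * Complex.I)+2) * (((a:ℂ) + (t:ℂ) * Complex.I)/(b:ℂ) * ((((a:ℂ) + (t:ℂ) * Complex.I)+1)/((b:ℂ)+1) * (kummerM (((a:ℂ) + (t:ℂ) * Complex.I)+2) (b+2) x))) := by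
    have h := kummer_ode (((a:ℂ) + (t:ℂ) * Complex.I)+2) (b+2) (by linarith) x
    rw [show (((a:ℂ) + (t:ℂ) * Complex.I)+2)+2 = ((a:ℂ) + (t:ℂ) * Complex.I)+4 from by ring,
      show ((b+2)+2 : ℝ) = b+4 from by ring,
      show (((a:ℂ) + (t:ℂ) * Complex.I)+2)+1 = ((a:ℂ) + (t:ℂ) * Complex.I)+3 from by ring,
      show ((b+2)+1 : ℝ) = b+3 from by ring,
      show (((b+2:ℝ)):ℂ) = (b:ℂ)+2 from by push_cast; ring] at h
    linear_combination ((((a:ℂ) + (t:ℂ) * Complex.I)/(b:ℂ)) * ((((a:ℂ) + (t:ℂ) * Complex.I)+1)/((b:ℂ)+1))) * h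
  have hRV2 : (x:ℂ) * (((a:ℂ) - (t:ℂ) * Complex.I)/(b:ℂ) * ((((a:ℂ) - (t:ℂ) * Complex.I)+1)/((b:ℂ)+1) * (kummerM (((a:ℂ) - (t:ℂ) * Complex.I)+2) (b+2) x))) = ((x:ℂ) - b - 0) * (((a:ℂ) - (t:ℂ) * Complex.I)/(b:ℂ) * (kummerM (((a:ℂ) - (t:ℂ) * Complex.I)+1) (b+1) x)) + (((a:ℂ) - (t:ℂ) * Complex.I)+0) * (kummerM ((a:ℂ) - (t:ℂ) * Complex.I) b x) := by
    have h := kummer_ode ((a:ℂ) - (t:ℂ) * Complex.I) b hb x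
    linear_combination h
  have hRV3 : (x:ℂ) * (((a:ℂ) - (t:ℂ) * Complex.I)/(b:ℂ) * ((((a:ℂ) - (t:ℂ) * Complex.I)+1)/((b:ℂ)+1) * ((((a:ℂ) - (t:ℂ) * Complex.I)+2)/((b:ℂ)+2) * (kummerM (((a:ℂ) - (t:ℂ) * Complex.I)+3) (b+3) x)))) = ((x:ℂ) - b - 1) * (((a:ℂ) - (t:ℂ) * Complex.I)/(b:ℂ) * ((((a:ℂ) - (t:ℂ) * Complex.I)+1)/((b:ℂ)+1) * (kummerM (((a:ℂ) - (t:ℂ) * Complex.I)+2) (b+2) x))) + (((a:ℂ) - (t:ℂ) * Complex.I)+1) * (((a:ℂ) - (t:ℂ) * Complex.I)/(b:ℂ) * (kummerM (((a:ℂ) - (t:ℂ) * Complex.I)+1) (b+1) x)) := by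
    have h := kummer_ode (((a:ℂ) - (t:ℂ) * Complex.I)+1) (b+1) (by linarith) x
    rw [show (((a:ℂ) - (t:ℂ) * Complex.I)+1)+2 = ((a:ℂ) - (t:ℂ) * Complex.I)+3 from by ring,
      show ((b+1)+2 : ℝ) = b+3 from by ring,
      show (((a:ℂ) - (t:ℂ) * Complex.I)+1)+1 = ((a:ℂ) - (t:ℂ) * Complex.I)+2 from by ring,
      show ((b+1)+1 : ℝ) = b+2 from by ring,
      show (((b+1:ℝ)):ℂ) = (b:ℂ)+1 from by push_cast; ring] at h
    linear_combination ((((a:ℂ) - (t:ℂ) * Complex.I)/(b:ℂ))) * h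
  have hRV4 : (x:ℂ) * (((a:ℂ) - (t:ℂ) * Complex.I)/(b:ℂ) * ((((a:ℂ) - (t:ℂ) * Complex.I)+1)/((b:ℂ)+1) * ((((a:ℂ) - (t:ℂ) * Complex.I)+2)/((b:ℂ)+2) * ((((a:ℂ) - (t:ℂ) * Complex.I)+3)/((b:ℂ)+3) * (kummerM (((a:ℂ) - (t:ℂ) * Complex.I)+4) (b+4) x))))) = ((x:ℂ) - b - 2) * (((a:ℂ) - (t:ℂ) * Complex.I)/(b:ℂ) * ((((a:ℂ) - (t:ℂ) * Complex.I)+1)/((b:ℂ)+1) * ((((a:ℂ) - (t:ℂ) * Complex.I)+2)/((b:ℂ)+2) * (kummerM (((a:ℂ) - (t:ℂ) * Complex.I)+3) (b+3) x)))) + (((a:ℂ) - (t:ℂ) * Complex.I)+2) * (((a:ℂ) - (t:ℂ) * Complex.I)/(b:ℂ) * ((((a:ℂ) - (t:ℂ) * Complex.I)+1)/((b:ℂ)+1) * (kummerM (((a:ℂ) - (t:ℂ) * Complex.I)+2) (b+2) x))) := by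
    have h := kummer_ode (((a:ℂ) - (t:ℂ) * Complex.I)+2) (b+2) (by linarith) x
    rw [show (((a:ℂ) - (t:ℂ) * Complex.I)+2)+2 = ((a:ℂ) - (t:ℂ) * Complex.I)+4 from by ring,
      show ((b+2)+2 : ℝ) = b+4 from by ring,
      show (((a:ℂ) - (t:ℂ) * Complex.I)+2)+1 = ((a:ℂ) - (t:ℂ) * Complex.I)+3 from by ring,
      show ((b+2)+1 : ℝ) = b+3 from by ring,
      show (((b+2:ℝ)):ℂ) = (b:ℂ)+2 from by push_cast; ring] at h
    linear_combination ((((a:ℂ) - (t:ℂ) * Complex.I)/(b:ℂ)) * ((((a:ℂ) - (t:ℂ) * Complex.I)+1)/((b:ℂ)+1))) * h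
  have hgfun : (fun x' : ℝ => f t x') = (fun y : ℝ => (kummerM ((a:ℂ) + (t:ℂ) * Complex.I) b y) * (kummerM ((a:ℂ) - (t:ℂ) * Complex.I) b y)) := funext fun y => hf t y
  have hd1 : deriv (fun y : ℝ => (kummerM ((a:ℂ) + (t:ℂ) * Complex.I) b y) * (kummerM ((a:ℂ) - (t:ℂ) * Complex.I) b y)) = (fun y : ℝ => ((((a:ℂ) + (t:ℂ) * Complex.I)/(b:ℂ) * (kummerM (((a:ℂ) + (t:ℂ) * Complex.I)+1) (b+1) y)) * (kummerM ((a:ℂ) - (t:ℂ) * Complex.I) b y) + (kummerM ((a:ℂ) + (t:ℂ) * Complex.I) b y) * (((a:ℂ) - (t:ℂ) * Complex.I)/(b:ℂ) * (kummerM (((a:ℂ) - (t:ℂ) * Complex.I)+1) (b+1) y)))) :=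
    funext fun y => ((hU0 y).mul (hV0 y)).deriv
  have hd2 : deriv (fun y : ℝ => ((((a:ℂ) + (t:ℂ) * Complex.I)/(b:ℂ) * (kummerM (((a:ℂ) + (t:ℂ) * Complex.I)+1) (b+1) y)) * (kummerM ((a:ℂ) - (t:ℂ) * Complex.I) b y) + (kummerM ((a:ℂ) + (t:ℂ) * Complex.I) b y) * (((a:ℂ) - (t:ℂ) * Complex.I)/(b:ℂ) * (kummerM (((a:ℂ) - (t:ℂ) * Complex.I)+1) (b+1) y)))) = (fun y : ℝ => (((((a:ℂ) + (t:ℂ) * Complex.I)/(b:ℂ) * ((((a:ℂ) + (t:ℂ) * Complex.I)+1)/((b:ℂ)+1) * (kummerM (((a:ℂ) + (t:ℂ) * Complex.I)+2) (b+2) y))) * (kummerM ((a:ℂ) - (t:ℂ) * Complex.I) b y) + (((a:ℂ) + (t:ℂ) * Complex.I)/(b:ℂ) * (kummerM (((a:ℂ) + (t:ℂ) * Complex.I)+1) (b+1) y)) * (((a:ℂ) - (t:ℂ) * Complex.I)/(b:ℂ) * (kummerM (((a:ℂ) - (t:ℂ) * Complex.I)+1) (b+1) y))) + ((((a:ℂ)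 + (t:ℂ) * Complex.I)/(b:ℂ) * (kummerM (((a:ℂ) + (t:ℂ) * Complex.I)+1) (b+1) y)) * (((a:ℂ) - (t:ℂ) * Complex.I)/(b:ℂ) * (kummerM (((a:ℂ) - (t:ℂ) * Complex.I)+1) (b+1) y)) + (kummerM ((a:ℂ) + (t:ℂ) * Complex.I) b y) * (((a:ℂ) - (t:ℂ) * Complex.I)/(b:ℂ) * ((((a:ℂ) - (t:ℂ) * Complex.I)+1)/((b:ℂ)+1) * (kummerM (((a:ℂ) - (t:ℂ) * Complex.I)+2) (b+2) y)))))) :=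
    funext fun y => (((hU1 y).mul (hV0 y)).add ((hU0 y).mul (hV1 y))).deriv
  have hd3 : deriv (fun y : ℝ => (((((a:ℂ) + (t:ℂ) * Complex.I)/(b:ℂ) * ((((a:ℂ) + (t:ℂ) * Complex.I)+1)/((b:ℂ)+1) * (kummerM (((a:ℂ) + (t:ℂ) * Complex.I)+2) (b+2) y))) * (kummerM ((a:ℂ) - (t:ℂ) * Complex.I) b y) + (((a:ℂ) + (t:ℂ) * Complex.I)/(b:ℂ) * (kummerM (((a:ℂ) + (t:ℂ) * Complex.I)+1) (b+1) y)) * (((a:ℂ) - (t:ℂ) * Complex.I)/(b:ℂ) * (kummerM (((a:ℂ) - (t:ℂ) * Complex.I)+1) (b+1) y))) + ((((a:ℂ) + (t:ℂ) * Complex.I)/(b:ℂ) * (kummerM (((a:ℂ) + (t:ℂ) * Complex.I)+1) (b+1) y)) * (((a:ℂ) - (t:ℂ) * Complex.I)/(b:ℂ) * (kummerM (((a:ℂ) - (t:ℂ) * Complex.I)+1) (b+1) y)) + (kummerM ((a:ℂ) + (t:ℂ) * Complex.I) b y) * (((a:ℂ) - (t:ℂ) * Complex.I)/(b:ℂ)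 * ((((a:ℂ) - (t:ℂ) * Complex.I)+1)/((b:ℂ)+1) * (kummerM (((a:ℂ) - (t:ℂ) * Complex.I)+2) (b+2) y)))))) = (fun y : ℝ => ((((((a:ℂ) + (t:ℂ) * Complex.I)/(b:ℂ) * ((((a:ℂ) + (t:ℂ) * Complex.I)+1)/((b:ℂ)+1) * ((((a:ℂ) + (t:ℂ) * Complex.I)+2)/((b:ℂ)+2) * (kummerM (((a:ℂ) + (t:ℂ) * Complex.I)+3) (b+3) y)))) * (kummerM ((a:ℂ) - (t:ℂ) * Complex.I) b y) + (((a:ℂ) + (t:ℂ) * Complex.I)/(b:ℂ) * ((((a:ℂ) + (t:ℂ) * Complex.I)+1)/((b:ℂ)+1) * (kummerM (((a:ℂ) + (t:ℂ) * Complex.I)+2) (b+2) y))) * (((a:ℂ) - (t:ℂ) * Complex.I)/(b:ℂ) * (kummerM (((a:ℂ) - (t:ℂ) * Complex.I)+1) (b+1) y))) + ((((a:ℂ) + (t:ℂ) * Complex.I)/(b:ℂ) * ((((a:ℂ) + (t:ℂ) * Complex.I)+1)/((b:ℂ)+1) * (kummerM (((a:ℂ) + (t:ℂ) * Complex.I)+2)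 (b+2) y))) * (((a:ℂ) - (t:ℂ) * Complex.I)/(b:ℂ) * (kummerM (((a:ℂ) - (t:ℂ) * Complex.I)+1) (b+1) y)) + (((a:ℂ) + (t:ℂ) * Complex.I)/(b:ℂ) * (kummerM (((a:ℂ) + (t:ℂ) * Complex.I)+1) (b+1) y)) * (((a:ℂ) - (t:ℂ) * Complex.I)/(b:ℂ) * ((((a:ℂ) - (t:ℂ) * Complex.I)+1)/((b:ℂ)+1) * (kummerM (((a:ℂ) - (t:ℂ) * Complex.I)+2) (b+2) y))))) + (((((a:ℂ) + (t:ℂ) * Complex.I)/(b:ℂ) * ((((a:ℂ) + (t:ℂ) * Complex.I)+1)/((b:ℂ)+1) * (kummerM (((a:ℂ) + (t:ℂ) * Complex.I)+2) (b+2) y))) * (((a:ℂ) - (t:ℂ) * Complex.I)/(b:ℂ) * (kummerM (((a:ℂ) - (t:ℂ) * Complex.I)+1) (b+1) y)) + (((a:ℂ) + (t:ℂ) * Complex.I)/(b:ℂ) * (kummerM (((a:ℂ) + (t:ℂ) * Complex.I)+1) (b+1) y)) * (((a:ℂ) - (t:ℂ) * Complex.I)/(b:ℂ) * ((((a:ℂ)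 - (t:ℂ) * Complex.I)+1)/((b:ℂ)+1) * (kummerM (((a:ℂ) - (t:ℂ) * Complex.I)+2) (b+2) y)))) + ((((a:ℂ) + (t:ℂ) * Complex.I)/(b:ℂ) * (kummerM (((a:ℂ) + (t:ℂ) * Complex.I)+1) (b+1) y)) * (((a:ℂ) - (t:ℂ) * Complex.I)/(b:ℂ) * ((((a:ℂ) - (t:ℂ) * Complex.I)+1)/((b:ℂ)+1) * (kummerM (((a:ℂ) - (t:ℂ) * Complex.I)+2) (b+2) y))) + (kummerM ((a:ℂ) + (t:ℂ) * Complex.I) b y) * (((a:ℂ) - (t:ℂ) * Complex.I)/(b:ℂ) * ((((a:ℂ) - (t:ℂ) * Complex.I)+1)/((b:ℂ)+1) * ((((a:ℂ) - (t:ℂ) * Complex.I)+2)/((b:ℂ)+2) * (kummerM (((a:ℂ) - (t:ℂ) * Complex.I)+3) (b+3) y)))))))) :=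
    funext fun y => ((((hU2 y).mul (hV0 y)).add ((hU1 y).mul (hV1 y))).add (((hU1 y).mul (hV1 y)).add ((hU0 y).mul (hV2 y)))).deriv
  have hd4x : deriv (fun y : ℝ => ((((((a:ℂ) + (t:ℂ) * Complex.I)/(b:ℂ) * ((((a:ℂ) + (t:ℂ) * Complex.I)+1)/((b:ℂ)+1) * ((((a:ℂ) + (t:ℂ) * Complex.I)+2)/((b:ℂ)+2) * (kummerM (((a:ℂ) + (t:ℂ) * Complex.I)+3) (b+3) y)))) * (kummerM ((a:ℂ) - (t:ℂ) * Complex.I) b y) + (((a:ℂ) + (t:ℂ) * Complex.I)/(b:ℂ) * ((((a:ℂ) + (t:ℂ) * Complex.I)+1)/((b:ℂ)+1) * (kummerM (((a:ℂ) + (t:ℂ) * Complex.I)+2) (b+2) y))) * (((a:ℂ) - (t:ℂ) * Complex.I)/(b:ℂ) * (kummerM (((a:ℂ) - (t:ℂ) * Complex.I)+1) (b+1) y))) + ((((a:ℂ) + (t:ℂ) * Complex.I)/(b:ℂ) * ((((a:ℂ) + (t:ℂ) * Complex.I)+1)/((b:ℂ)+1) * (kummerM (((a:ℂ) + (t:ℂ)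 * Complex.I)+2) (b+2) y))) * (((a:ℂ) - (t:ℂ) * Complex.I)/(b:ℂ) * (kummerM (((a:ℂ) - (t:ℂ) * Complex.I)+1) (b+1) y)) + (((a:ℂ) + (t:ℂ) * Complex.I)/(b:ℂ) * (kummerM (((a:ℂ) + (t:ℂ) * Complex.I)+1) (b+1) y)) * (((a:ℂ) - (t:ℂ) * Complex.I)/(b:ℂ) * ((((a:ℂ) - (t:ℂ) * Complex.I)+1)/((b:ℂ)+1) * (kummerM (((a:ℂ) - (t:ℂ) * Complex.I)+2) (b+2) y))))) + (((((a:ℂ) + (t:ℂ) * Complex.I)/(b:ℂ) * ((((a:ℂ) + (t:ℂ) * Complex.I)+1)/((b:ℂ)+1) * (kummerM (((a:ℂ) + (t:ℂ) * Complex.I)+2) (b+2) y))) * (((a:ℂ) - (t:ℂ) * Complex.I)/(b:ℂ) * (kummerM (((a:ℂ) - (t:ℂ) * Complex.I)+1) (b+1) y)) + (((a:ℂ) + (t:ℂ) * Complex.I)/(b:ℂ) * (kummerM (((a:ℂ) + (t:ℂ) * Complex.I)+1) (b+1) y)) * (((a:ℂ) - (t:ℂ) * Complex.I)/(b:ℂ)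 * ((((a:ℂ) - (t:ℂ) * Complex.I)+1)/((b:ℂ)+1) * (kummerM (((a:ℂ) - (t:ℂ) * Complex.I)+2) (b+2) y)))) + ((((a:ℂ) + (t:ℂ) * Complex.I)/(b:ℂ) * (kummerM (((a:ℂ) + (t:ℂ) * Complex.I)+1) (b+1) y)) * (((a:ℂ) - (t:ℂ) * Complex.I)/(b:ℂ) * ((((a:ℂ) - (t:ℂ) * Complex.I)+1)/((b:ℂ)+1) * (kummerM (((a:ℂ) - (t:ℂ) * Complex.I)+2) (b+2) y))) + (kummerM ((a:ℂ) + (t:ℂ) * Complex.I) b y) * (((a:ℂ) - (t:ℂ) * Complex.I)/(b:ℂ) * ((((a:ℂ) - (t:ℂ) * Complex.I)+1)/((b:ℂ)+1) * ((((a:ℂ) - (t:ℂ) * Complex.I)+2)/((b:ℂ)+2) * (kummerM (((a:ℂ) - (t:ℂ) * Complex.I)+3) (b+3) y)))))))) x = (((((((a:ℂ) + (t:ℂ) * Complex.I)/(b:ℂ) * ((((a:ℂ) + (t:ℂ) * Complex.I)+1)/((b:ℂ)+1) * ((((a:ℂ) + (t:ℂ) * Complex.I)+2)/((b:ℂ)+2)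 * ((((a:ℂ) + (t:ℂ) * Complex.I)+3)/((b:ℂ)+3) * (kummerM (((a:ℂ) + (t:ℂ) * Complex.I)+4) (b+4) x))))) * (kummerM ((a:ℂ) - (t:ℂ) * Complex.I) b x) + (((a:ℂ) + (t:ℂ) * Complex.I)/(b:ℂ) * ((((a:ℂ) + (t:ℂ) * Complex.I)+1)/((b:ℂ)+1) * ((((a:ℂ) + (t:ℂ) * Complex.I)+2)/((b:ℂ)+2) * (kummerM (((a:ℂ) + (t:ℂ) * Complex.I)+3) (b+3) x)))) * (((a:ℂ) - (t:ℂ) * Complex.I)/(b:ℂ) * (kummerM (((a:ℂ) - (t:ℂ) * Complex.I)+1) (b+1) x))) + ((((a:ℂ) + (t:ℂ) * Complex.I)/(b:ℂ) * ((((a:ℂ) + (t:ℂ) * Complex.I)+1)/((b:ℂ)+1) * ((((a:ℂ) + (t:ℂ) * Complex.I)+2)/((b:ℂ)+2) * (kummerM (((a:ℂ) + (t:ℂ) * Complex.I)+3) (b+3) x)))) * (((a:ℂ) - (t:ℂ) * Complex.I)/(b:ℂ) * (kummerM (((a:ℂ) - (t:ℂ) * Complex.I)+1) (b+1) x)) +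 (((a:ℂ) + (t:ℂ) * Complex.I)/(b:ℂ) * ((((a:ℂ) + (t:ℂ) * Complex.I)+1)/((b:ℂ)+1) * (kummerM (((a:ℂ) + (t:ℂ) * Complex.I)+2) (b+2) x))) * (((a:ℂ) - (t:ℂ) * Complex.I)/(b:ℂ) * ((((a:ℂ) - (t:ℂ) * Complex.I)+1)/((b:ℂ)+1) * (kummerM (((a:ℂ) - (t:ℂ) * Complex.I)+2) (b+2) x))))) + (((((a:ℂ) + (t:ℂ) * Complex.I)/(b:ℂ) * ((((a:ℂ) + (t:ℂ) * Complex.I)+1)/((b:ℂ)+1) * ((((a:ℂ) + (t:ℂ) * Complex.I)+2)/((b:ℂ)+2) * (kummerM (((a:ℂ) + (t:ℂ) * Complex.I)+3) (b+3) x)))) * (((a:ℂ) - (t:ℂ) * Complex.I)/(b:ℂ) * (kummerM (((a:ℂ) - (t:ℂ) * Complex.I)+1) (b+1) x)) + (((a:ℂ) + (t:ℂ) * Complex.I)/(b:ℂ) * ((((a:ℂ) + (t:ℂ) * Complex.I)+1)/((b:ℂ)+1) * (kummerM (((a:ℂ) + (t:ℂ) * Complex.I)+2) (b+2) x))) * (((a:ℂ)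 - (t:ℂ) * Complex.I)/(b:ℂ) * ((((a:ℂ) - (t:ℂ) * Complex.I)+1)/((b:ℂ)+1) * (kummerM (((a:ℂ) - (t:ℂ) * Complex.I)+2) (b+2) x)))) + ((((a:ℂ) + (t:ℂ) * Complex.I)/(b:ℂ) * ((((a:ℂ) + (t:ℂ) * Complex.I)+1)/((b:ℂ)+1) * (kummerM (((a:ℂ) + (t:ℂ) * Complex.I)+2) (b+2) x))) * (((a:ℂ) - (t:ℂ) * Complex.I)/(b:ℂ) * ((((a:ℂ) - (t:ℂ) * Complex.I)+1)/((b:ℂ)+1) * (kummerM (((a:ℂ) - (t:ℂ) * Complex.I)+2) (b+2) x))) + (((a:ℂ) + (t:ℂ) * Complex.I)/(b:ℂ) * (kummerM (((a:ℂ) + (t:ℂ) * Complex.I)+1) (b+1) x)) * (((a:ℂ) - (t:ℂ) * Complex.I)/(b:ℂ) * ((((a:ℂ) - (t:ℂ) * Complex.I)+1)/((b:ℂ)+1) * ((((a:ℂ) - (t:ℂ) * Complex.I)+2)/((b:ℂ)+2) * (kummerM (((a:ℂ) - (t:ℂ) * Complex.I)+3) (b+3) x))))))) + ((((((a:ℂ)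 + (t:ℂ) * Complex.I)/(b:ℂ) * ((((a:ℂ) + (t:ℂ) * Complex.I)+1)/((b:ℂ)+1) * ((((a:ℂ) + (t:ℂ) * Complex.I)+2)/((b:ℂ)+2) * (kummerM (((a:ℂ) + (t:ℂ) * Complex.I)+3) (b+3) x)))) * (((a:ℂ) - (t:ℂ) * Complex.I)/(b:ℂ) * (kummerM (((a:ℂ) - (t:ℂ) * Complex.I)+1) (b+1) x)) + (((a:ℂ) + (t:ℂ) * Complex.I)/(b:ℂ) * ((((a:ℂ) + (t:ℂ) * Complex.I)+1)/((b:ℂ)+1) * (kummerM (((a:ℂ) + (t:ℂ) * Complex.I)+2) (b+2) x))) * (((a:ℂ) - (t:ℂ) * Complex.I)/(b:ℂ) * ((((a:ℂ) - (t:ℂ) * Complex.I)+1)/((b:ℂ)+1) * (kummerM (((a:ℂ) - (t:ℂ) * Complex.I)+2) (b+2) x)))) + ((((a:ℂ) + (t:ℂ) * Complex.I)/(b:ℂ) * ((((a:ℂ) + (t:ℂ) * Complex.I)+1)/((b:ℂ)+1) * (kummerM (((a:ℂ) + (t:ℂ) * Complex.I)+2) (b+2) x))) * (((a:ℂ) -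 (t:ℂ) * Complex.I)/(b:ℂ) * ((((a:ℂ) - (t:ℂ) * Complex.I)+1)/((b:ℂ)+1) * (kummerM (((a:ℂ) - (t:ℂ) * Complex.I)+2) (b+2) x))) + (((a:ℂ) + (t:ℂ) * Complex.I)/(b:ℂ) * (kummerM (((a:ℂ) + (t:ℂ) * Complex.I)+1) (b+1) x)) * (((a:ℂ) - (t:ℂ) * Complex.I)/(b:ℂ) * ((((a:ℂ) - (t:ℂ) * Complex.I)+1)/((b:ℂ)+1) * ((((a:ℂ) - (t:ℂ) * Complex.I)+2)/((b:ℂ)+2) * (kummerM (((a:ℂ) - (t:ℂ) * Complex.I)+3) (b+3) x)))))) + (((((a:ℂ) + (t:ℂ) * Complex.I)/(b:ℂ) * ((((a:ℂ) + (t:ℂ) * Complex.I)+1)/((b:ℂ)+1) * (kummerM (((a:ℂ) + (t:ℂ) * Complex.I)+2) (b+2) x))) * (((a:ℂ) - (t:ℂ) * Complex.I)/(b:ℂ) * ((((a:ℂ) - (t:ℂ) * Complex.I)+1)/((b:ℂ)+1) * (kummerM (((a:ℂ) - (t:ℂ) * Complex.I)+2) (b+2) x))) + (((a:ℂ) + (t:ℂ)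 * Complex.I)/(b:ℂ) * (kummerM (((a:ℂ) + (t:ℂ) * Complex.I)+1) (b+1) x)) * (((a:ℂ) - (t:ℂ) * Complex.I)/(b:ℂ) * ((((a:ℂ) - (t:ℂ) * Complex.I)+1)/((b:ℂ)+1) * ((((a:ℂ) - (t:ℂ) * Complex.I)+2)/((b:ℂ)+2) * (kummerM (((a:ℂ) - (t:ℂ) * Complex.I)+3) (b+3) x))))) + ((((a:ℂ) + (t:ℂ) * Complex.I)/(b:ℂ) * (kummerM (((a:ℂ) + (t:ℂ) * Complex.I)+1) (b+1) x)) * (((a:ℂ) - (t:ℂ) * Complex.I)/(b:ℂ) * ((((a:ℂ) - (t:ℂ) * Complex.I)+1)/((b:ℂ)+1) * ((((a:ℂ) - (t:ℂ) * Complex.I)+2)/((b:ℂ)+2) * (kummerM (((a:ℂ) - (t:ℂ) * Complex.I)+3) (b+3) x)))) + (kummerM ((a:ℂ) + (t:ℂ) * Complex.I) b x) * (((a:ℂ) - (t:ℂ) * Complex.I)/(b:ℂ) * ((((a:ℂ) - (t:ℂ) * Complex.I)+1)/((b:ℂ)+1) * ((((a:ℂ) - (t:ℂ) * Complex.I)+2)/((b:ℂ)+2)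 * ((((a:ℂ) - (t:ℂ) * Complex.I)+3)/((b:ℂ)+3) * (kummerM (((a:ℂ) - (t:ℂ) * Complex.I)+4) (b+4) x))))))))) :=
    (((((hU3 x).mul (hV0 x)).add ((hU2 x).mul (hV1 x))).add (((hU2 x).mul (hV1 x)).add ((hU1 x).mul (hV2 x)))).add ((((hU2 x).mul (hV1 x)).add ((hU1 x).mul (hV2 x))).add (((hU1 x).mul (hV2 x)).add ((hU0 x).mul (hV3 x))))).deriv
  have i4 : iteratedDeriv 4 (fun y : ℝ => (kummerM ((a:ℂ) + (t:ℂ) * Complex.I) b y) * (kummerM ((a:ℂ) - (t:ℂ) * Complex.I) b y)) = deriv (iteratedDeriv 3 (fun y : ℝ => (kummerM ((a:ℂ) + (t:ℂ) * Complex.I) b y) * (kummerM ((a:ℂ) - (t:ℂ) * Complex.I) b y))) := iteratedDeriv_succ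
  have i3 : iteratedDeriv 3 (fun y : ℝ => (kummerM ((a:ℂ) + (t:ℂ) * Complex.I) b y) * (kummerM ((a:ℂ) - (t:ℂ) * Complex.I) b y)) = deriv (iteratedDeriv 2 (fun y : ℝ => (kummerM ((a:ℂ) + (t:ℂ) * Complex.I) b y) * (kummerM ((a:ℂ) - (t:ℂ) * Complex.I) b y))) := iteratedDeriv_succ
  have i2 : iteratedDeriv 2 (fun y : ℝ => (kummerM ((a:ℂ) + (t:ℂ) * Complex.I) b y) * (kummerM ((a:ℂ) - (t:ℂ) * Complex.I) b y)) = deriv (iteratedDeriv 1 (fun y : ℝ => (kummerM ((a:ℂ) + (t:ℂ) * Complex.I) b y) * (kummerM ((a:ℂ) - (t:ℂ) * Complex.I) b y))) := iteratedDeriv_succ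
  rw [hgfun, hf t x]
  rw [i4, i3, i2, iteratedDeriv_one]
  rw [hd1, hd2, hd3, hd4x]
  beta_reduce
  linear_combination (norm := ring1)
    ((x:ℂ)^2 * (kummerM ((a:ℂ) - (t:ℂ) * Complex.I) b x)) * hRU4 + ((x:ℂ)^2 * (kummerM ((a:ℂ) + (t:ℂ) * Complex.I) b x)) * hRV4
    + ((-1)*(x:ℂ)*(kummerM ((a:ℂ) - (t:ℂ) * Complex.I) b x) + 4*(x:ℂ)^2*(((a:ℂ) - (t:ℂ) * Complex.I)/(b:ℂ) * (kummerM (((a:ℂ) - (t:ℂ) * Complex.I)+1) (b+1) x)) + (-3)*(x:ℂ)^2*(kummerM ((a:ℂ) - (t:ℂ) * Complex.I) b x) + 3*(b:ℂ)*(x:ℂ)*(kummerM ((a:ℂ) - (t:ℂ) * Complex.I) b x)) * hRU3 + ((-1)*(x:ℂ)*(kummerM ((a:ℂ) + (t:ℂ) * Complex.I) b x) + 4*(x:ℂ)^2*(((a:ℂ) + (t:ℂ) * Complex.I)/(b:ℂ) * (kummerM (((a:ℂ) + (t:ℂ) * Complex.I)+1) (b+1) x)) + (-3)*(x:ℂ)^2*(kummerM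 ((a:ℂ) + (t:ℂ) * Complex.I) b x) + 3*(b:ℂ)*(x:ℂ)*(kummerM ((a:ℂ) + (t:ℂ) * Complex.I) b x)) * hRV3
    + ((kummerM ((a:ℂ) - (t:ℂ) * Complex.I) b x) + (-1)*(x:ℂ)*(((a:ℂ) - (t:ℂ) * Complex.I)/(b:ℂ) * (kummerM (((a:ℂ) - (t:ℂ) * Complex.I)+1) (b+1) x)) + (x:ℂ)*(kummerM ((a:ℂ) - (t:ℂ) * Complex.I) b x) + 6*(x:ℂ)^2*(((a:ℂ) - (t:ℂ) * Complex.I)/(b:ℂ) * ((((a:ℂ) - (t:ℂ) * Complex.I)+1)/((b:ℂ)+1) * (kummerM (((a:ℂ) - (t:ℂ) * Complex.I)+2) (b+2) x))) + (-8)*(x:ℂ)^2*(((a:ℂ) - (t:ℂ) * Complex.I)/(b:ℂ) * (kummerM (((a:ℂ) - (t:ℂ) * Complex.I)+1) (b+1) x)) + 2*(x:ℂ)^2*(kummerM ((a:ℂ) - (t:ℂ) * Complex.I) b x) + (-3)*(b:ℂ)*(kummerM ((a:ℂ) - (t:ℂ) * Complex.I) b x) + 8*(b:ℂ)*(x:ℂ)*(((a:ℂ)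 - (t:ℂ) * Complex.I)/(b:ℂ) * (kummerM (((a:ℂ) - (t:ℂ) * Complex.I)+1) (b+1) x)) + (-4)*(b:ℂ)*(x:ℂ)*(kummerM ((a:ℂ) - (t:ℂ) * Complex.I) b x) + 2*(b:ℂ)^2*(kummerM ((a:ℂ) - (t:ℂ) * Complex.I) b x) + (t:ℂ)*(x:ℂ)*Complex.I*(kummerM ((a:ℂ) - (t:ℂ) * Complex.I) b x) + (-3)*(a:ℂ)*(x:ℂ)*(kummerM ((a:ℂ) - (t:ℂ) * Complex.I) b x)) * hRU2 + ((kummerM ((a:ℂ) + (t:ℂ) * Complex.I) b x) + (-1)*(x:ℂ)*(((a:ℂ) + (t:ℂ) * Complex.I)/(b:ℂ) * (kummerM (((a:ℂ) + (t:ℂ) * Complex.I)+1) (b+1) x)) + (x:ℂ)*(kummerM ((a:ℂ) + (t:ℂ) * Complex.I) b x) + (-2)*(x:ℂ)^2*(((a:ℂ) + (t:ℂ) * Complex.I)/(b:ℂ) * (kummerM (((a:ℂ) + (t:ℂ) * Complex.I)+1) (b+1) x)) + 2*(x:ℂ)^2*(kummerM ((a:ℂ) + (t:ℂ) * Complex.I)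 b x) + (-3)*(b:ℂ)*(kummerM ((a:ℂ) + (t:ℂ) * Complex.I) b x) + 2*(b:ℂ)*(x:ℂ)*(((a:ℂ) + (t:ℂ) * Complex.I)/(b:ℂ) * (kummerM (((a:ℂ) + (t:ℂ) * Complex.I)+1) (b+1) x)) + (-4)*(b:ℂ)*(x:ℂ)*(kummerM ((a:ℂ) + (t:ℂ) * Complex.I) b x) + 2*(b:ℂ)^2*(kummerM ((a:ℂ) + (t:ℂ) * Complex.I) b x) + 5*(t:ℂ)*(x:ℂ)*Complex.I*(kummerM ((a:ℂ) + (t:ℂ) * Complex.I) b x) + 3*(a:ℂ)*(x:ℂ)*(kummerM ((a:ℂ) + (t:ℂ) * Complex.I) b x)) * hRV2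
    + ((-4)*(t:ℂ)^2*(x:ℂ)*(kummerM ((a:ℂ) + (t:ℂ) * Complex.I) b x)*(kummerM ((a:ℂ) - (t:ℂ) * Complex.I) b x)) * Complex.I_sq
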